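/- There is a constant C such that for all T > 0: ∑_{k ∈ (2πℤ)², k ≠ 0} exp(-T · d(k,0)³) · d(k,0)^(-1) ≤ C · T^(-1/2), where d(k,0) = |k1| + |k2|^(2/3). -/

import Mathlib

open Real

lemma geom_aux {x : ℝ} (hx : 0 < x) :
    Summable (fun n : ℕ => Real.exp (-(x * ((n : ℝ) + 1)))) ∧
    ∑' n : ℕ, Real.exp (-(x * ((n : ℝ) + 1))) ≤ 1 / x := by
  have hr0 : 0 ≤ Real.exp (-x) := (Real.exp_pos _).le
  have hr1 : Real.exp (-x) < 1 := by
    rw [Real.exp_lt_one_iff]; linarith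
  have key : (fun n : ℕ => Real.exp (-(x * ((n : ℝ) + 1)))) =
      fun n : ℕ => Real.exp (-x) ^ n * Real.exp (-x) := by
    funext n
    rw [← pow_succ, ← Real.exp_nat_mul]
    congr 1
    push_cast
    ring
  have hsum : Summable (fun n : ℕ => Real.exp (-x) ^ n * Real.exp (-x)) :=
    (summable_geometric_of_lt_one hr0 hr1).mul_right _
  refine ⟨key ▸ hsum, ?_⟩
  rw [key, tsum_mul_right, tsum_geometric_of_lt_one hr0 hr1]
  have h1r : 0 < 1 - Real.exp (-x) := by linarith
  rw [inv_mul_eq_div, div_le_div_iff₀ h1r hx]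
  have hmul : Real.exp (-x) * (x + 1) ≤ Real.exp (-x) * Real.exp x :=
    mul_le_mul_of_nonneg_left (Real.add_one_le_exp x) hr0
  rw [← Real.exp_add] at hmul
  simp at hmul
  nlinarith

lemma sumA {s : ℝ} (hs : 0 < s) :
    Summable (fun n : ℕ => Real.exp (-(s * ((n : ℝ) + 1) ^ 3))) ∧
    ∑' n : ℕ, Real.exp (-(s * ((n : ℝ) + 1) ^ 3)) ≤ 2 * s ^ (-(1 : ℝ) / 3) + 1 := by
  have hmaj : ∀ n : ℕ, Real.exp (-(s * ((n : ℝ) + 1) ^ 3)) ≤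
      Real.exp (-(s * ((n : ℝ) + 1))) := by
    intro n
    apply Real.exp_le_exp.mpr
    have h1 : (0 : ℝ) ≤ (n : ℝ) := Nat.cast_nonneg n
    have h2 : (n:ℝ) + 1 ≤ ((n:ℝ)+1)^3 := by nlinarith [mul_nonneg h1 h1, mul_nonneg (mul_nonneg h1 h1) h1]
    nlinarith [mul_le_mul_of_nonneg_left h2 hs.le]
  have hpos : ∀ n : ℕ, (0:ℝ) ≤ Real.exp (-(s * ((n : ℝ) + 1) ^ 3)) :=
    fun n => (Real.exp_pos _).le
  have hf : Summable (fun n : ℕ => Real.exp (-(s * ((n : ℝ) + 1) ^ 3))) :=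
    Summable.of_nonneg_of_le hpos hmaj (geom_aux hs).1
  refine ⟨hf, ?_⟩
  set N := ⌈s ^ (-(1 : ℝ) / 3)⌉₊ with hN
  have hrp : 0 < s ^ (-(1 : ℝ) / 3) := Real.rpow_pos_of_pos hs _
  have hNlb : s ^ (-(1 : ℝ) / 3) ≤ (N : ℝ) := Nat.le_ceil _
  have hNub : (N : ℝ) ≤ s ^ (-(1 : ℝ) / 3) + 1 := (Nat.ceil_lt_add_one hrp.le).le
  have hNpos : 0 < (N : ℝ) := lt_of_lt_of_le hrp hNlb
  rw [← Summable.sum_add_tsum_nat_add N hf]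
  have hhead : ∑ i ∈ Finset.range N, Real.exp (-(s * ((i : ℝ) + 1) ^ 3)) ≤ (N : ℝ) := by
    calc ∑ i ∈ Finset.range N, Real.exp (-(s * ((i : ℝ) + 1) ^ 3))
        ≤ ∑ i ∈ Finset.range N, (1:ℝ) := by
          apply Finset.sum_le_sum
          intro i _
          rw [Real.exp_le_one_iff]
          have : (0:ℝ) ≤ ((i:ℝ)+1)^3 := by positivity
          nlinarith
      _ = (N : ℝ) := by simp
  have htail : ∑' i : ℕ, Real.exp (-(s * (((i + N : ℕ) : ℝ) + 1) ^ 3)) ≤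
      s ^ (-(1 : ℝ) / 3) := by
    have hx : 0 < s * (N:ℝ)^2 := by positivity
    have hcomp : ∀ i : ℕ, Real.exp (-(s * (((i + N : ℕ) : ℝ) + 1) ^ 3)) ≤
        Real.exp (-((s * (N:ℝ)^2) * ((i : ℝ) + 1))) := by
      intro i
      apply Real.exp_le_exp.mpr
      push_cast
      have hi : (0:ℝ) ≤ (i:ℝ) := Nat.cast_nonneg i
      have h1 : (N:ℝ) ≤ (i:ℝ) + (N:ℝ) + 1 := by linarith
      have h2 : (i:ℝ) + 1 ≤ (i:ℝ) + (N:ℝ) + 1 := by linarith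
      have h3 : (N:ℝ)^2 * ((i:ℝ)+1) ≤ ((i:ℝ)+(N:ℝ)+1)^2 * ((i:ℝ)+(N:ℝ)+1) := by
        apply mul_le_mul _ h2 (by linarith) (by positivity)
        have := pow_le_pow_left₀ hNpos.le h1 2
        simpa using this
      nlinarith [h3]
    have hsum1 : Summable (fun i : ℕ => Real.exp (-(s * (((i + N : ℕ) : ℝ) + 1) ^ 3))) := by
      have := (summable_nat_add_iff N).mpr hf
      simpa using this
    calc ∑' i : ℕ, Real.exp (-(s * (((i + N : ℕ) : ℝ) + 1) ^ 3))
        ≤ ∑' i : ℕ, Real.exp (-((s * (N:ℝ)^2) * ((i : ℝ) + 1))) :=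
          Summable.tsum_le_tsum hcomp hsum1 (geom_aux hx).1
      _ ≤ 1 / (s * (N:ℝ)^2) := (geom_aux hx).2
      _ ≤ s ^ (-(1 : ℝ) / 3) := by
          rw [div_le_iff₀ hx]
          have hsq : (s ^ (-(1 : ℝ) / 3))^2 ≤ (N:ℝ)^2 := pow_le_pow_left₀ hrp.le hNlb 2
          have e1 : (s ^ (-(1:ℝ)/3))^2 = s ^ (-(2:ℝ)/3) := by
            rw [← Real.rpow_natCast (s ^ (-(1 : ℝ) / 3)) 2, ← Real.rpow_mul hs.le]
            norm_num
          have e2 : s * s ^ (-(2:ℝ)/3) = s ^ ((1:ℝ)/3) := by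
            have h := Real.rpow_add hs 1 (-(2:ℝ)/3)
            rw [Real.rpow_one] at h
            rw [← h]; norm_num
          have e3 : s ^ (-(1:ℝ)/3) * s ^ ((1:ℝ)/3) = 1 := by
            rw [← Real.rpow_add hs]; norm_num
          have hkey : s ^ (-(1 : ℝ) / 3) * (s * (s ^ (-(1 : ℝ) / 3))^2) = 1 := by
            rw [e1, e2, e3]
          nlinarith [mul_le_mul_of_nonneg_left hsq (mul_nonneg hrp.le hs.le), hkey]
  linarith

lemma cube_diff (n : ℕ) :
    ((n : ℝ) + 1) ^ (-(2 : ℝ) / 3) ≤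
      3 * (((n : ℝ) + 1) ^ ((1 : ℝ) / 3) - (n : ℝ) ^ ((1 : ℝ) / 3)) := by
  have hn : (0:ℝ) ≤ (n:ℝ) := Nat.cast_nonneg n
  have hn1 : (0:ℝ) < (n:ℝ) + 1 := by linarith
  set u := (n : ℝ) ^ ((1 : ℝ) / 3) with hu
  set v := ((n : ℝ) + 1) ^ ((1 : ℝ) / 3) with hv
  have hu0 : 0 ≤ u := Real.rpow_nonneg hn _
  have hv0 : 0 < v := Real.rpow_pos_of_pos hn1 _
  have huv : u ≤ v := Real.rpow_le_rpow hn (by linarith) (by norm_num)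
  have hu3 : u ^ 3 = (n : ℝ) := by
    rw [hu, ← Real.rpow_natCast ((n:ℝ) ^ ((1:ℝ)/3)) 3, ← Real.rpow_mul hn]
    norm_num
  have hv3 : v ^ 3 = (n : ℝ) + 1 := by
    rw [hv, ← Real.rpow_natCast (((n:ℝ)+1) ^ ((1:ℝ)/3)) 3, ← Real.rpow_mul hn1.le]
    norm_num
  have hval : ((n : ℝ) + 1) ^ (-(2 : ℝ) / 3) = (v ^ 2)⁻¹ := by
    rw [hv, ← Real.rpow_natCast (((n:ℝ)+1) ^ ((1:ℝ)/3)) 2, ← Real.rpow_mul hn1.le,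
      ← Real.rpow_neg hn1.le]
    norm_num
  rw [hval]
  have hv2 : (0:ℝ) < v ^ 2 := by positivity
  rw [inv_eq_one_div, div_le_iff₀ hv2]
  nlinarith [mul_nonneg (mul_nonneg (sub_nonneg.mpr huv) (sub_nonneg.mpr huv)) (by linarith : (0:ℝ) ≤ 2*v + u)]

lemma sumB {s : ℝ} (hs : 0 < s) :
    Summable (fun n : ℕ => Real.exp (-(s * ((n : ℝ) + 1) ^ 2)) * ((n : ℝ) + 1) ^ (-(2 : ℝ) / 3)) ∧
    ∑' n : ℕ, Real.exp (-(s * ((n : ℝ) + 1) ^ 2)) * ((n : ℝ) + 1) ^ (-(2 : ℝ) / 3)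
      ≤ 4 * s ^ (-(1 : ℝ) / 6) + 3 := by
  set f := fun n : ℕ => Real.exp (-(s * ((n : ℝ) + 1) ^ 2)) * ((n : ℝ) + 1) ^ (-(2 : ℝ) / 3) with hfdef
  have hpos : ∀ n : ℕ, (0:ℝ) ≤ f n := by
    intro n
    have : (0:ℝ) < (n:ℝ) + 1 := by positivity
    positivity
  have hmaj : ∀ n : ℕ, f n ≤ Real.exp (-(s * ((n : ℝ) + 1))) := by
    intro n
    have hn : (0:ℝ) ≤ (n:ℝ) := Nat.cast_nonneg n
    have h1 : (1:ℝ) ≤ (n:ℝ) + 1 := by linarith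
    have hr : ((n : ℝ) + 1) ^ (-(2 : ℝ) / 3) ≤ 1 :=
      Real.rpow_le_one_of_one_le_of_nonpos h1 (by norm_num)
    have he : Real.exp (-(s * ((n : ℝ) + 1) ^ 2)) ≤ Real.exp (-(s * ((n : ℝ) + 1))) := by
      apply Real.exp_le_exp.mpr
      nlinarith [mul_le_mul_of_nonneg_left (by nlinarith : (n:ℝ) + 1 ≤ ((n:ℝ)+1)^2) hs.le]
    calc f n ≤ Real.exp (-(s * ((n : ℝ) + 1) ^ 2)) * 1 := by
          apply mul_le_mul_of_nonneg_left hr (Real.exp_pos _).le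
      _ = Real.exp (-(s * ((n : ℝ) + 1) ^ 2)) := mul_one _
      _ ≤ _ := he
  have hf : Summable f := Summable.of_nonneg_of_le hpos hmaj (geom_aux hs).1
  refine ⟨hf, ?_⟩
  set N := ⌈s ^ (-(1 : ℝ) / 2)⌉₊ with hN
  have hrp : 0 < s ^ (-(1 : ℝ) / 2) := Real.rpow_pos_of_pos hs _
  have hNlb : s ^ (-(1 : ℝ) / 2) ≤ (N : ℝ) := Nat.le_ceil _
  have hNub : (N : ℝ) ≤ s ^ (-(1 : ℝ) / 2) + 1 := (Nat.ceil_lt_add_one hrp.le).le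
  have hNpos : 0 < (N : ℝ) := lt_of_lt_of_le hrp hNlb
  have hN1 : (1:ℝ) ≤ (N:ℝ) := by
    have : (0:ℕ) < N := by exact_mod_cast hNpos
    exact_mod_cast this
  rw [← Summable.sum_add_tsum_nat_add N hf]
  -- head bound
  have hhead : ∑ i ∈ Finset.range N, f i ≤ 3 * (N:ℝ) ^ ((1:ℝ)/3) := by
    have step : ∀ i ∈ Finset.range N, f i ≤
        3 * (((i:ℝ) + 1) ^ ((1:ℝ)/3)) - 3 * ((i:ℝ) ^ ((1:ℝ)/3)) := by
      intro i _
      have h1 : f i ≤ ((i : ℝ) + 1) ^ (-(2 : ℝ) / 3) := by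
        calc f i ≤ 1 * (((i : ℝ) + 1) ^ (-(2 : ℝ) / 3)) := by
              apply mul_le_mul_of_nonneg_right _ (Real.rpow_nonneg (by positivity) _)
              rw [Real.exp_le_one_iff]
              have : (0:ℝ) ≤ s * ((i:ℝ)+1)^2 := by positivity
              linarith
          _ = ((i : ℝ) + 1) ^ (-(2 : ℝ) / 3) := one_mul _
      calc f i ≤ ((i : ℝ) + 1) ^ (-(2 : ℝ) / 3) := h1
        _ ≤ 3 * (((i:ℝ) + 1) ^ ((1:ℝ)/3) - (i:ℝ) ^ ((1:ℝ)/3)) := cube_diff i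
        _ = 3 * (((i:ℝ) + 1) ^ ((1:ℝ)/3)) - 3 * ((i:ℝ) ^ ((1:ℝ)/3)) := by ring
    calc ∑ i ∈ Finset.range N, f i
        ≤ ∑ i ∈ Finset.range N,
            (3 * (((i:ℝ) + 1) ^ ((1:ℝ)/3)) - 3 * ((i:ℝ) ^ ((1:ℝ)/3))) :=
          Finset.sum_le_sum step
      _ = 3 * ((N:ℝ) ^ ((1:ℝ)/3)) - 3 * ((0:ℝ) ^ ((1:ℝ)/3)) := by
          have := Finset.sum_range_sub (fun i : ℕ => 3 * ((i:ℝ) ^ ((1:ℝ)/3))) N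
          simp only [Nat.cast_add, Nat.cast_one] at this ⊢
          convert this using 2 <;> norm_num
      _ = 3 * (N:ℝ) ^ ((1:ℝ)/3) := by
          rw [Real.zero_rpow (by norm_num)]; ring
  -- tail bound
  have hx : 0 < s * (N:ℝ) := by positivity
  have htail : ∑' i : ℕ, f (i + N) ≤ s ^ (-(1:ℝ)/6) := by
    have hcomp : ∀ i : ℕ, f (i + N) ≤
        (N:ℝ) ^ (-(2:ℝ)/3) * Real.exp (-((s * (N:ℝ)) * ((i:ℝ) + 1))) := by
      intro i
      have hi : (0:ℝ) ≤ (i:ℝ) := Nat.cast_nonneg i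
      have hcast : ((i + N : ℕ) : ℝ) = (i:ℝ) + (N:ℝ) := by push_cast; ring
      have hexp : Real.exp (-(s * (((i + N : ℕ) : ℝ) + 1) ^ 2)) ≤
          Real.exp (-((s * (N:ℝ)) * ((i:ℝ) + 1))) := by
        apply Real.exp_le_exp.mpr
        rw [hcast]
        have hkey : (N:ℝ) * ((i:ℝ)+1) ≤ ((i:ℝ) + (N:ℝ) + 1)^2 := by
          nlinarith [hi, hNpos.le, mul_nonneg hi hNpos.le, sq_nonneg ((i:ℝ)+1)]
        nlinarith [mul_le_mul_of_nonneg_left hkey hs.le]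
      have hrpw : (((i + N : ℕ) : ℝ) + 1) ^ (-(2:ℝ)/3) ≤ (N:ℝ) ^ (-(2:ℝ)/3) := by
        apply Real.rpow_le_rpow_of_nonpos hNpos (by rw [hcast]; linarith) (by norm_num)
      calc f (i + N)
          ≤ Real.exp (-((s * (N:ℝ)) * ((i:ℝ) + 1))) * ((N:ℝ) ^ (-(2:ℝ)/3)) :=
            mul_le_mul hexp hrpw (Real.rpow_nonneg (by positivity) _) (Real.exp_pos _).le
        _ = (N:ℝ) ^ (-(2:ℝ)/3) * Real.exp (-((s * (N:ℝ)) * ((i:ℝ) + 1))) := mul_comm _ _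
    have hsum1 : Summable (fun i : ℕ => f (i + N)) := (summable_nat_add_iff N).mpr hf
    have hsum2 := (geom_aux hx).1.mul_left ((N:ℝ) ^ (-(2:ℝ)/3))
    have h23 : (N:ℝ) ^ (-(2:ℝ)/3) = ((N:ℝ)^((2:ℝ)/3))⁻¹ := by
      rw [show (-(2:ℝ)/3) = -((2:ℝ)/3) by norm_num, Real.rpow_neg hNpos.le]
    have h53 : (N:ℝ) ^ ((5:ℝ)/3) = (N:ℝ) * (N:ℝ)^((2:ℝ)/3) := by
      have h := Real.rpow_add hNpos 1 ((2:ℝ)/3)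
      rw [Real.rpow_one] at h
      rw [show ((5:ℝ)/3) = 1 + (2:ℝ)/3 by norm_num, h]
    have hge : s ^ (-(5:ℝ)/6) ≤ (N:ℝ)^((5:ℝ)/3) := by
      have h1 : (s ^ (-(1:ℝ)/2)) ^ ((5:ℝ)/3) ≤ (N:ℝ)^((5:ℝ)/3) :=
        Real.rpow_le_rpow hrp.le hNlb (by norm_num)
      rwa [← Real.rpow_mul hs.le, show (-(1:ℝ)/2 * ((5:ℝ)/3)) = -(5:ℝ)/6 by norm_num] at h1
    have hs16 : s ^ ((1:ℝ)/6) ≤ (N:ℝ)^((2:ℝ)/3) * (s * (N:ℝ)) := by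
      have h := Real.rpow_add hs 1 (-(5:ℝ)/6)
      rw [Real.rpow_one] at h
      have h2 : s ^ ((1:ℝ)/6) = s * s ^ (-(5:ℝ)/6) := by
        rw [← h]; norm_num
      have h3 : s * s ^ (-(5:ℝ)/6) ≤ s * (N:ℝ)^((5:ℝ)/3) :=
        mul_le_mul_of_nonneg_left hge hs.le
      rw [h53] at h3
      rw [h2]
      nlinarith [h3]
    calc ∑' i : ℕ, f (i + N)
        ≤ ∑' i : ℕ, (N:ℝ) ^ (-(2:ℝ)/3) * Real.exp (-((s * (N:ℝ)) * ((i:ℝ) + 1))) :=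
          Summable.tsum_le_tsum hcomp hsum1 hsum2
      _ = (N:ℝ) ^ (-(2:ℝ)/3) * ∑' i : ℕ, Real.exp (-((s * (N:ℝ)) * ((i:ℝ) + 1))) :=
          tsum_mul_left
      _ ≤ (N:ℝ) ^ (-(2:ℝ)/3) * (1 / (s * (N:ℝ))) :=
          mul_le_mul_of_nonneg_left (geom_aux hx).2 (Real.rpow_nonneg hNpos.le _)
      _ = ((N:ℝ)^((2:ℝ)/3) * (s * (N:ℝ)))⁻¹ := by rw [h23, one_div, ← mul_inv]
      _ ≤ (s ^ ((1:ℝ)/6))⁻¹ := inv_anti₀ (Real.rpow_pos_of_pos hs _) hs16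
      _ = s ^ (-(1:ℝ)/6) := by
          rw [show (-(1:ℝ)/6) = -((1:ℝ)/6) by norm_num, Real.rpow_neg hs.le]
  -- combine
  have hN13 : (N:ℝ)^((1:ℝ)/3) ≤ s^(-(1:ℝ)/6) + 1 := by
    have hx0 : 0 < s^(-(1:ℝ)/6) := Real.rpow_pos_of_pos hs _
    have hx3 : (s^(-(1:ℝ)/6))^3 = s^(-(1:ℝ)/2) := by
      rw [← Real.rpow_natCast (s^(-(1:ℝ)/6)) 3, ← Real.rpow_mul hs.le]
      norm_num
    have hcube : (N:ℝ) ≤ (s^(-(1:ℝ)/6) + 1)^3 := by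
      nlinarith [hNub, hx0.le, hx3, sq_nonneg (s^(-(1:ℝ)/6)), mul_nonneg hx0.le hx0.le]
    have h1 : (N:ℝ)^((1:ℝ)/3) ≤ ((s^(-(1:ℝ)/6) + 1)^3)^((1:ℝ)/3) :=
      Real.rpow_le_rpow (Nat.cast_nonneg N) hcube (by norm_num)
    have h2 : ((s^(-(1:ℝ)/6) + 1)^3 : ℝ)^((1:ℝ)/3) = s^(-(1:ℝ)/6) + 1 := by
      rw [← Real.rpow_natCast (s^(-(1:ℝ)/6) + 1) 3, ← Real.rpow_mul (by positivity)]
      norm_num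
    rwa [h2] at h1
  linarith

lemma zsumA {s : ℝ} (hs : 0 < s) :
    Summable (fun a : ℤ => Real.exp (-(s * |(a : ℝ)| ^ 3))) ∧
    ∑' a : ℤ, Real.exp (-(s * |(a : ℝ)| ^ 3)) ≤ 4 * s ^ (-(1 : ℝ) / 3) + 3 := by
  set g : ℤ → ℝ := fun a => Real.exp (-(s * |(a : ℝ)| ^ 3)) with hg
  have hnegeq : (fun n : ℕ => g (-((n : ℤ) + 1))) =
      fun n : ℕ => Real.exp (-(s * ((n : ℝ) + 1) ^ 3)) := by
    funext n
    simp only [hg]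
    congr 2
    push_cast
    rw [abs_neg, abs_of_nonneg (by positivity)]
  have hposeq : (fun n : ℕ => g ((n : ℤ) + 1)) =
      fun n : ℕ => Real.exp (-(s * ((n : ℝ) + 1) ^ 3)) := by
    funext n
    simp only [hg]
    congr 2
    push_cast
    rw [abs_of_nonneg (by positivity)]
  have hA := sumA hs
  have hnat : Summable (fun n : ℕ => g (n : ℤ)) := by
    apply (summable_nat_add_iff 1).mp
    convert hposeq ▸ hA.1 using 2 with n
    · rfl
    · push_cast; rfl
  have hneg : Summable (fun n : ℕ => g (-((n : ℤ) + 1))) := hnegeq ▸ hA.1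
  constructor
  · exact Summable.of_nat_of_neg_add_one hnat hneg
  · rw [tsum_of_nat_of_neg_add_one hnat hneg]
    have h1 : ∑' n : ℕ, g (n : ℤ) = g 0 + ∑' n : ℕ, g ((n : ℤ) + 1) := by
      rw [Summable.tsum_eq_zero_add hnat]
      congr 1
    have hg0 : g 0 = 1 := by simp [hg]
    have h2 : ∑' n : ℕ, g ((n : ℤ) + 1) ≤ 2 * s ^ (-(1 : ℝ) / 3) + 1 := by
      rw [hposeq]; exact hA.2
    have h3 : ∑' n : ℕ, g (-((n : ℤ) + 1)) ≤ 2 * s ^ (-(1 : ℝ) / 3) + 1 := by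
      rw [hnegeq]; exact hA.2
    rw [h1, hg0]
    linarith

lemma zsumB {s : ℝ} (hs : 0 < s) :
    Summable (fun b : ℤ => if b = 0 then (0:ℝ) else
      Real.exp (-(s * (b : ℝ) ^ 2)) * |(b : ℝ)| ^ (-(2 : ℝ) / 3)) ∧
    ∑' b : ℤ, (if b = 0 then (0:ℝ) else
      Real.exp (-(s * (b : ℝ) ^ 2)) * |(b : ℝ)| ^ (-(2 : ℝ) / 3))
      ≤ 8 * s ^ (-(1 : ℝ) / 6) + 6 := by
  set g : ℤ → ℝ := fun b => if b = 0 then (0:ℝ) else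
      Real.exp (-(s * (b : ℝ) ^ 2)) * |(b : ℝ)| ^ (-(2 : ℝ) / 3) with hg
  have hnegeq : (fun n : ℕ => g (-((n : ℤ) + 1))) =
      fun n : ℕ => Real.exp (-(s * ((n : ℝ) + 1) ^ 2)) * ((n : ℝ) + 1) ^ (-(2 : ℝ) / 3) := by
    funext n
    simp only [hg]
    rw [if_neg (by omega)]
    push_cast
    rw [abs_neg, abs_of_nonneg (by positivity : (0:ℝ) ≤ (n:ℝ) + 1)]
    ring_nf
  have hposeq : (fun n : ℕ => g ((n : ℤ) + 1)) =
      fun n : ℕ => Real.exp (-(s * ((n : ℝ) + 1) ^ 2)) * ((n : ℝ) + 1) ^ (-(2 : ℝ) / 3) := by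
    funext n
    simp only [hg]
    rw [if_neg (by omega)]
    push_cast
    rw [abs_of_nonneg (by positivity : (0:ℝ) ≤ (n:ℝ) + 1)]
  have hB := sumB hs
  have hnat : Summable (fun n : ℕ => g (n : ℤ)) := by
    apply (summable_nat_add_iff 1).mp
    convert hposeq ▸ hB.1 using 2 with n
    · rfl
    · push_cast; rfl
  have hneg : Summable (fun n : ℕ => g (-((n : ℤ) + 1))) := hnegeq ▸ hB.1
  constructor
  · exact Summable.of_nat_of_neg_add_one hnat hneg
  · rw [tsum_of_nat_of_neg_add_one hnat hneg]
    have h1 : ∑' n : ℕ, g (n : ℤ) = g 0 + ∑' n : ℕ, g ((n : ℤ) + 1) := by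
      rw [Summable.tsum_eq_zero_add hnat]
      congr 1
    have hg0 : g 0 = 0 := by simp [hg]
    have h2 : ∑' n : ℕ, g ((n : ℤ) + 1) ≤ 4 * s ^ (-(1 : ℝ) / 6) + 3 := by
      rw [hposeq]; exact hB.2
    have h3 : ∑' n : ℕ, g (-((n : ℤ) + 1)) ≤ 4 * s ^ (-(1 : ℝ) / 6) + 3 := by
      rw [hnegeq]; exact hB.2
    rw [h1, hg0]
    linarith

lemma masterP {T p : ℝ} (hT : 0 < T) (hp0 : 0 ≤ p) (hp : p ≤ 1/2) :
    Real.exp (-(2*T)) * T ^ (-p) ≤ T ^ (-(1:ℝ)/2) := by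
  have hq0 : 0 ≤ 1/2 - p := by linarith
  have hq1 : 1/2 - p ≤ 1 := by linarith
  have master : Real.exp (-(2*T)) * T ^ (1/2 - p) ≤ 1 := by
    rcases le_or_gt T 1 with hT1 | hT1
    · have h1 : T ^ (1/2 - p) ≤ 1 := Real.rpow_le_one hT.le hT1 hq0
      have h2 : Real.exp (-(2*T)) ≤ 1 := by
        rw [Real.exp_le_one_iff]; linarith
      nlinarith [Real.exp_pos (-(2*T)), Real.rpow_nonneg hT.le (1/2 - p)]
    · have h1 : T ^ (1/2 - p) ≤ T ^ (1:ℝ) :=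
        Real.rpow_le_rpow_of_exponent_le hT1.le hq1
      rw [Real.rpow_one] at h1
      have h2 : T ≤ Real.exp T := by nlinarith [Real.add_one_le_exp T]
      calc Real.exp (-(2*T)) * T ^ (1/2 - p)
          ≤ Real.exp (-(2*T)) * Real.exp T := by
            apply mul_le_mul_of_nonneg_left (le_trans h1 h2) (Real.exp_pos _).le
        _ = Real.exp (-T) := by rw [← Real.exp_add]; ring_nf
        _ ≤ 1 := by rw [Real.exp_le_one_iff]; linarith
  have hsplit : T ^ (-p) = T ^ (1/2 - p) * T ^ (-(1:ℝ)/2) := by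
    rw [← Real.rpow_add hT]
    congr 1
    ring
  rw [hsplit, ← mul_assoc]
  calc Real.exp (-(2*T)) * T ^ (1/2 - p) * T ^ (-(1:ℝ)/2)
      ≤ 1 * T ^ (-(1:ℝ)/2) :=
        mul_le_mul_of_nonneg_right master (Real.rpow_nonneg hT.le _)
    _ = T ^ (-(1:ℝ)/2) := one_mul _

lemma prod_tsum {f g : ℤ → ℝ} (hf : Summable f) (hg : Summable g)
    (hf0 : ∀ a, 0 ≤ f a) (hg0 : ∀ b, 0 ≤ g b) :
    Summable (fun p : ℤ × ℤ => f p.1 * g p.2) ∧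
    ∑' p : ℤ × ℤ, f p.1 * g p.2 = (∑' a : ℤ, f a) * (∑' b : ℤ, g b) := by
  have hs : Summable (fun p : ℤ × ℤ => f p.1 * g p.2) :=
    hf.mul_of_nonneg hg hf0 hg0
  refine ⟨hs, ?_⟩
  rw [hs.tsum_prod' (fun a => hg.mul_left (f a))]
  calc ∑' a : ℤ, ∑' b : ℤ, f a * g b
      = ∑' a : ℤ, f a * ∑' b : ℤ, g b := by
        apply tsum_congr; intro a; exact tsum_mul_left
    _ = (∑' a : ℤ, f a) * (∑' b : ℤ, g b) := tsum_mul_right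

/-- The anisotropic distance to the origin of a lattice point `k = 2πm ∈ (2πℤ)²`:
`d(k,0) = |k₁| + |k₂|^(2/3)`. -/
noncomputable def latticeDist (m : ℤ × ℤ) : ℝ :=
  |2 * π * (m.1 : ℝ)| + |2 * π * (m.2 : ℝ)| ^ ((2 : ℝ) / 3)

set_option maxHeartbeats 1600000 in
/-- Weighted heat-kernel sum bound with weight 1/d(k,0), bounded by C T^(-1/2). -/
theorem lattice_exp_sum_bound_inv :
    ∃ C : ℝ, 0 < C ∧ ∀ T : ℝ, 0 < T →
      Summable (fun m : {m : ℤ × ℤ // m ≠ 0} =>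
        Real.exp (-T * latticeDist m ^ 3) * (latticeDist m)⁻¹) ∧
      (∑' m : {m : ℤ × ℤ // m ≠ 0},
          Real.exp (-T * latticeDist m ^ 3) * (latticeDist m)⁻¹)
        ≤ C * T ^ (-(1 : ℝ) / 2) := by
  refine ⟨105, by norm_num, ?_⟩
  intro T hT
  have hπ : (3:ℝ) < π := Real.pi_gt_three
  set sA : ℝ := 4 * π ^ 3 * T with hsA_def
  set sB : ℝ := 2 * π ^ 2 * T with hsB_def
  have hsA : 0 < sA := by rw [hsA_def]; positivity
  have hsB : 0 < sB := by rw [hsB_def]; positivity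
  set u : ℤ → ℝ := fun a => Real.exp (-(sA * |(a : ℝ)| ^ 3)) with hu_def
  set e0 : ℤ → ℝ := fun b => if b = 0 then (1:ℝ) else 0 with he0_def
  set v : ℤ → ℝ := fun b => if b = 0 then (0:ℝ) else
      Real.exp (-(sB * (b : ℝ) ^ 2)) * |(b : ℝ)| ^ (-(2 : ℝ) / 3) with hv_def
  set F : ℤ × ℤ → ℝ := fun p =>
    Real.exp (-T * latticeDist p ^ 3) * (latticeDist p)⁻¹ with hF_def
  set H : ℤ × ℤ → ℝ := fun p =>
    Real.exp (-(2*T)) * (u p.1 * e0 p.2) + Real.exp (-(2*T)) * (u p.1 * v p.2) with hH_def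
  have hu0 : ∀ a, 0 ≤ u a := fun a => (Real.exp_pos _).le
  have he00 : ∀ b, 0 ≤ e0 b := by
    intro b; rw [he0_def]; dsimp only; split <;> norm_num
  have hv0 : ∀ b, 0 ≤ v b := by
    intro b; rw [hv_def]; dsimp only; split
    · exact le_rfl
    · positivity
  have hA := zsumA hsA
  have hB := zsumB hsB
  have he0sum : Summable e0 := by
    apply summable_of_ne_finset_zero (s := {(0:ℤ)})
    intro b hb
    simp only [Finset.mem_singleton] at hb
    rw [he0_def]; simp [hb]
  have he0tsum : ∑' b : ℤ, e0 b = 1 := by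
    rw [he0_def]; exact tsum_ite_eq 0 1
  have hP1 := prod_tsum hA.1 he0sum hu0 he00
  have hP2 := prod_tsum hA.1 hB.1 hu0 hv0
  have HS : Summable H := by
    rw [hH_def]
    exact ((hP1.1.mul_left _).add (hP2.1.mul_left _))
  have hH0 : ∀ p, 0 ≤ H p := by
    intro p
    rw [hH_def]
    dsimp only
    have := hu0 p.1; have := he00 p.2; have := hv0 p.2
    positivity
  -- the pointwise bound
  have hFH : ∀ p : ℤ × ℤ, F p ≤ H p := by
    intro ⟨a, b⟩
    have habs_a : |2 * π * (a:ℝ)| = 2 * π * |(a:ℝ)| := by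
      rw [abs_mul, abs_of_pos (by positivity : (0:ℝ) < 2 * π)]
    have habs_b : |2 * π * (b:ℝ)| = 2 * π * |(b:ℝ)| := by
      rw [abs_mul, abs_of_pos (by positivity : (0:ℝ) < 2 * π)]
    have hd_eq : latticeDist (a, b) =
        2 * π * |(a:ℝ)| + (2 * π * |(b:ℝ)|) ^ ((2:ℝ)/3) := by
      unfold latticeDist
      rw [habs_a, habs_b]
    by_cases hb : b = 0
    · subst hb
      have hb0 : latticeDist (a, (0:ℤ)) = 2 * π * |(a:ℝ)| := by
        rw [hd_eq]
        norm_num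
      by_cases ha : a = 0
      · subst ha
        have : latticeDist ((0:ℤ), (0:ℤ)) = 0 := by rw [hb0]; norm_num
        rw [hF_def]
        dsimp only
        rw [this]
        simp only [inv_zero, mul_zero]
        exact hH0 _
      · have hA1 : (1:ℝ) ≤ |(a:ℝ)| := by
          have : (1:ℤ) ≤ |a| := Int.one_le_abs (by exact_mod_cast ha)
          calc (1:ℝ) ≤ ((|a| : ℤ) : ℝ) := by exact_mod_cast this
            _ = |(a:ℝ)| := by push_cast; rfl
        have hd1 : (1:ℝ) ≤ latticeDist (a, 0) := by
          rw [hb0]; nlinarith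
        have hdinv : (latticeDist (a, 0))⁻¹ ≤ 1 := inv_le_one_of_one_le₀ hd1
        have hexp : Real.exp (-T * latticeDist (a, 0) ^ 3) ≤
            Real.exp (-(2*T)) * Real.exp (-(sA * |(a:ℝ)| ^ 3)) := by
          rw [← Real.exp_add]
          apply Real.exp_le_exp.mpr
          rw [hb0, hsA_def]
          have hA3 : (1:ℝ) ≤ |(a:ℝ)|^3 := one_le_pow₀ hA1
          have hπ3 : (27:ℝ) < π^3 := by nlinarith
          have hexpand : (2 * π * |(a:ℝ)|)^3 = 8 * π^3 * |(a:ℝ)|^3 := by ring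
          rw [hexpand]
          nlinarith [mul_le_mul_of_nonneg_left hA3 (by positivity : (0:ℝ) ≤ π^3 * T)]
        have hHval : H (a, 0) = Real.exp (-(2*T)) * u a := by
          rw [hH_def, he0_def, hv_def]
          simp
        rw [hF_def, hHval]
        dsimp only
        calc Real.exp (-T * latticeDist (a, 0) ^ 3) * (latticeDist (a, 0))⁻¹
            ≤ (Real.exp (-(2*T)) * Real.exp (-(sA * |(a:ℝ)| ^ 3))) * 1 := by
              apply mul_le_mul hexp hdinv (by positivity) (by positivity)
          _ = Real.exp (-(2*T)) * u a := by rw [hu_def, mul_one]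
    · -- b ≠ 0
      have hB1 : (1:ℝ) ≤ |(b:ℝ)| := by
        have : (1:ℤ) ≤ |b| := Int.one_le_abs (by exact_mod_cast hb)
        calc (1:ℝ) ≤ ((|b| : ℤ) : ℝ) := by exact_mod_cast this
          _ = |(b:ℝ)| := by push_cast; rfl
      set x : ℝ := 2 * π * |(a:ℝ)| with hx_def
      set y : ℝ := (2 * π * |(b:ℝ)|) ^ ((2:ℝ)/3) with hy_def
      have hx0 : 0 ≤ x := by positivity
      have h2πb : (1:ℝ) ≤ 2 * π * |(b:ℝ)| := by nlinarith
      have hy1 : (1:ℝ) ≤ y := Real.one_le_rpow h2πb (by norm_num)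
      have hd1 : (1:ℝ) ≤ latticeDist (a, b) := by rw [hd_eq]; linarith [hx0, hy1]
      have hdpos : (0:ℝ) < latticeDist (a, b) := lt_of_lt_of_le one_pos hd1
      -- inverse bound
      have hbr_pos : (0:ℝ) < |(b:ℝ)| ^ ((2:ℝ)/3) :=
        Real.rpow_pos_of_pos (by linarith) _
      have hy_ge : |(b:ℝ)| ^ ((2:ℝ)/3) ≤ y := by
        rw [hy_def]
        apply Real.rpow_le_rpow (abs_nonneg _) (by nlinarith) (by norm_num)
      have hy_le_d : y ≤ latticeDist (a, b) := by rw [hd_eq]; linarith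
      have hdinv : (latticeDist (a, b))⁻¹ ≤ |(b:ℝ)| ^ (-(2:ℝ)/3) := by
        have h1 : (latticeDist (a, b))⁻¹ ≤ (|(b:ℝ)| ^ ((2:ℝ)/3))⁻¹ :=
          inv_anti₀ hbr_pos (le_trans hy_ge hy_le_d)
        rwa [show (-(2:ℝ)/3) = -((2:ℝ)/3) by norm_num,
          Real.rpow_neg (abs_nonneg _)]
      -- exponent bound
      have hy3 : y ^ 3 = 4 * π^2 * (b:ℝ)^2 := by
        rw [hy_def, ← Real.rpow_natCast ((2 * π * |(b:ℝ)|) ^ ((2:ℝ)/3)) 3,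
          ← Real.rpow_mul (by positivity)]
        rw [show ((2:ℝ)/3 * (3:ℕ) : ℝ) = ((2:ℕ):ℝ) by push_cast; ring]
        rw [Real.rpow_natCast]
        rw [show ((2 * π * |(b:ℝ)|) ^ (2:ℕ) : ℝ) = 4 * π^2 * |(b:ℝ)|^2 by ring]
        rw [sq_abs]
      have hsuper : x^3 + y^3 ≤ latticeDist (a, b) ^ 3 := by
        rw [hd_eq]
        have hy0 : (0:ℝ) ≤ y := by linarith
        nlinarith [mul_nonneg hx0 hy0, mul_nonneg (mul_nonneg hx0 hy0) hy0,
          mul_nonneg (mul_nonneg hx0 hx0) hy0]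
      have hexp : Real.exp (-T * latticeDist (a, b) ^ 3) ≤
          Real.exp (-(2*T)) * (Real.exp (-(sA * |(a:ℝ)| ^ 3)) *
            Real.exp (-(sB * (b:ℝ) ^ 2))) := by
        rw [← Real.exp_add, ← Real.exp_add]
        apply Real.exp_le_exp.mpr
        have hx3 : x^3 = 8 * π^3 * |(a:ℝ)|^3 := by rw [hx_def]; ring
        have hb2 : (1:ℝ) ≤ (b:ℝ)^2 := by nlinarith [sq_abs (b:ℝ)]
        have hA30 : (0:ℝ) ≤ |(a:ℝ)|^3 := by positivity
        rw [hsA_def, hsB_def]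
        nlinarith [hsuper, hx3, hy3, mul_le_mul_of_nonneg_left hb2
          (by positivity : (0:ℝ) ≤ 2 * π^2 * T),
          mul_nonneg (by positivity : (0:ℝ) ≤ 4 * π^3 * T) hA30]
      have hHval : H (a, b) = Real.exp (-(2*T)) *
          (Real.exp (-(sA * |(a:ℝ)| ^ 3)) *
            (Real.exp (-(sB * (b:ℝ) ^ 2)) * |(b:ℝ)| ^ (-(2:ℝ)/3))) := by
        rw [hH_def, he0_def, hv_def, hu_def]
        simp [hb]
      rw [hF_def, hHval]
      dsimp only
      calc Real.exp (-T * latticeDist (a, b) ^ 3) * (latticeDist (a, b))⁻¹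
          ≤ (Real.exp (-(2*T)) * (Real.exp (-(sA * |(a:ℝ)| ^ 3)) *
              Real.exp (-(sB * (b:ℝ) ^ 2)))) * (|(b:ℝ)| ^ (-(2:ℝ)/3)) := by
            apply mul_le_mul hexp hdinv (by positivity) (by positivity)
        _ = _ := by ring
  have hF0 : ∀ p : ℤ × ℤ, 0 ≤ F p := by
    intro p
    rw [hF_def]
    dsimp only
    unfold latticeDist
    positivity
  have SumF : Summable F := Summable.of_nonneg_of_le hF0 hFH HS
  have hsupp : Function.support F ⊆ {m : ℤ × ℤ | m ≠ 0} := by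
    intro p hp
    simp only [Set.mem_setOf_eq]
    intro hp0
    apply hp
    rw [hF_def, hp0]
    have h0 : latticeDist (0 : ℤ × ℤ) = 0 := by
      unfold latticeDist
      norm_num
    dsimp only
    rw [h0, inv_zero, mul_zero]
  constructor
  · exact SumF.subtype _
  · have heq : (∑' m : {m : ℤ × ℤ // m ≠ 0},
        Real.exp (-T * latticeDist m ^ 3) * (latticeDist m)⁻¹) = ∑' p : ℤ × ℤ, F p :=
      tsum_subtype_eq_of_support_subset hsupp
    rw [heq]
    have step1 : ∑' p : ℤ × ℤ, F p ≤ ∑' p : ℤ × ℤ, H p := Summable.tsum_le_tsum hFH SumF HS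
    have step2 : ∑' p : ℤ × ℤ, H p =
        Real.exp (-(2*T)) * ((∑' a : ℤ, u a) * 1) +
        Real.exp (-(2*T)) * ((∑' a : ℤ, u a) * (∑' b : ℤ, v b)) := by
      rw [hH_def]
      rw [Summable.tsum_add (hP1.1.mul_left _) (hP2.1.mul_left _)]
      rw [tsum_mul_left, tsum_mul_left, hP1.2, hP2.2, he0tsum]
    -- numeric bounds
    have hAle : sA ^ (-(1:ℝ)/3) ≤ T ^ (-(1:ℝ)/3) := by
      apply Real.rpow_le_rpow_of_nonpos hT _ (by norm_num)
      rw [hsA_def]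
      have h1 : (1:ℝ) ≤ 4*π^3 := by nlinarith
      nlinarith [mul_le_mul_of_nonneg_right h1 hT.le]
    have hBle : sB ^ (-(1:ℝ)/6) ≤ T ^ (-(1:ℝ)/6) := by
      apply Real.rpow_le_rpow_of_nonpos hT _ (by norm_num)
      rw [hsB_def]
      have h1 : (1:ℝ) ≤ 2*π^2 := by nlinarith
      nlinarith [mul_le_mul_of_nonneg_right h1 hT.le]
    set X : ℝ := T ^ (-(1:ℝ)/3) with hX
    set Y : ℝ := T ^ (-(1:ℝ)/6) with hY
    set Z : ℝ := T ^ (-(1:ℝ)/2) with hZ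
    have hXY : X * Y = Z := by
      rw [hX, hY, hZ, ← Real.rpow_add hT]
      congr 1; ring
    have hXpos : 0 < X := Real.rpow_pos_of_pos hT _
    have hYpos : 0 < Y := Real.rpow_pos_of_pos hT _
    have hZpos : 0 < Z := Real.rpow_pos_of_pos hT _
    have hU : ∑' a : ℤ, u a ≤ 4 * X + 3 := le_trans hA.2 (by nlinarith)
    have hV : ∑' b : ℤ, v b ≤ 8 * Y + 6 := le_trans hB.2 (by nlinarith)
    have hUpos : 0 ≤ ∑' a : ℤ, u a := tsum_nonneg hu0
    have hVpos : 0 ≤ ∑' b : ℤ, v b := tsum_nonneg hv0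
    have hEpos : 0 < Real.exp (-(2*T)) := Real.exp_pos _
    -- master inequalities
    have m0 : Real.exp (-(2*T)) ≤ Z := by
      have h := masterP hT (le_refl (0:ℝ)) (by norm_num)
      rw [neg_zero, Real.rpow_zero, mul_one] at h
      rw [hZ]; exact h
    have m16 : Real.exp (-(2*T)) * Y ≤ Z := by
      have h := masterP hT (by norm_num : (0:ℝ) ≤ 1/6) (by norm_num)
      rw [hY, hZ, show (-(1:ℝ)/6) = -((1:ℝ)/6) by norm_num]
      exact h
    have m13 : Real.exp (-(2*T)) * X ≤ Z := by
      have h := masterP hT (by norm_num : (0:ℝ) ≤ 1/3) (by norm_num)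
      rw [hX, hZ, show (-(1:ℝ)/3) = -((1:ℝ)/3) by norm_num]
      exact h
    have m12 : Real.exp (-(2*T)) * Z ≤ Z := by
      have h := masterP hT (by norm_num : (0:ℝ) ≤ 1/2) (by norm_num)
      rw [hZ]
      nth_rewrite 1 [show (-(1:ℝ)/2) = -((1:ℝ)/2) by norm_num]
      exact h
    calc ∑' p : ℤ × ℤ, F p ≤ ∑' p : ℤ × ℤ, H p := step1
      _ = Real.exp (-(2*T)) * ((∑' a : ℤ, u a) * 1) +
          Real.exp (-(2*T)) * ((∑' a : ℤ, u a) * (∑' b : ℤ, v b)) := step2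
      _ ≤ Real.exp (-(2*T)) * ((4*X+3) * 1) +
          Real.exp (-(2*T)) * ((4*X+3) * (8*Y+6)) := by
        apply add_le_add
        · apply mul_le_mul_of_nonneg_left (by nlinarith) hEpos.le
        · apply mul_le_mul_of_nonneg_left _ hEpos.le
          apply mul_le_mul hU hV hVpos (by nlinarith)
      _ = 21 * Real.exp (-(2*T)) + 24 * (Real.exp (-(2*T)) * Y)
          + 28 * (Real.exp (-(2*T)) * X) + 32 * (Real.exp (-(2*T)) * (X*Y)) := by ring
      _ ≤ 21 * Z + 24 * Z + 28 * Z + 32 * Z := by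
        rw [hXY]
        apply add_le_add (add_le_add (add_le_add _ _) _) _
        · nlinarith
        · nlinarith
        · nlinarith
        · nlinarith
      _ = 105 * T ^ (-(1:ℝ)/2) := by rw [hZ]; ring
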